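/- Translation invariance of the doubled products (the core of the Lemma in Section 5 of the paper, proving u'^{k}_m = u'^{k}_l): let l, m ∈ {1,…,N} and define α : {1,…,N} → {1,…,N} by α(i) = ((i + m − l − 1) mod N) + 1. Then for every subset I ⊆ {1,…,N} with |I| = k and l ∈ I, the image α(I) has cardinality k, contains m, and ∏_{i∈I, j∉I} φ(x_j − x_i)·φ(x_i − x_j) = ∏_{i∈α(I), j∉α(I)} φ(x_j − x_i)·φ(x_i − x_j). -/

import Mathlib

open Complex Finset

/-- The odd theta function `ϑ(z|τ)`. -/
noncomputable def ϑ (τ : ℂ) (z : ℂ) : ℂ :=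
  -∑' k : ℤ, Complex.exp (Real.pi * Complex.I * τ * ((k : ℂ) + 1 / 2) ^ 2
      + 2 * Real.pi * Complex.I * (z + 1 / 2) * ((k : ℂ) + 1 / 2))

/-- The Kronecker elliptic function `φ(z) = ϑ'(0)·ϑ(z+ħ)/(ϑ(z)·ϑ(ħ))`. -/
noncomputable def φ₁ (τ hbar z : ℂ) : ℂ :=
  deriv (ϑ τ) 0 * ϑ τ (z + hbar) / (ϑ τ z * ϑ τ hbar)

/-- The cyclic shift `α(i) = ((i + m − l − 1) mod N) + 1` on `{1,…,N}`. -/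
def alphaMap (N l m i : ℕ) : ℕ := (((i : ℤ) + (m : ℤ) - (l : ℤ) - 1) % (N : ℤ)).toNat + 1

/- ### Auxiliary lemmas -/

lemma theta_add_one (τ z : ℂ) : ϑ τ (z + 1) = -ϑ τ z := by
  simp only [ϑ, neg_neg]
  rw [neg_eq_iff_eq_neg, ← tsum_neg]
  refine tsum_congr fun k => ?_
  have h1 : (Real.pi : ℂ) * Complex.I * τ * ((k : ℂ) + 1 / 2) ^ 2
      + 2 * Real.pi * Complex.I * (z + 1 + 1 / 2) * ((k : ℂ) + 1 / 2)
      = ((Real.pi : ℂ) * Complex.I * τ * ((k : ℂ) + 1 / 2) ^ 2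
      + 2 * Real.pi * Complex.I * (z + 1 / 2) * ((k : ℂ) + 1 / 2))
      + ((k : ℂ) * (2 * Real.pi * Complex.I) + Real.pi * Complex.I) := by ring
  simp only [h1, Complex.exp_add]
  rw [Complex.exp_int_mul_two_pi_mul_I, Complex.exp_pi_mul_I]
  ring

lemma phi_add_one (τ h z : ℂ) : φ₁ τ h (z + 1) = φ₁ τ h z := by
  unfold φ₁
  rw [show z + 1 + h = (z + h) + 1 by ring, theta_add_one, theta_add_one,
    mul_neg, neg_mul, neg_div_neg_eq]

lemma phi_add_int (τ h z : ℂ) (n : ℤ) : φ₁ τ h (z + n) = φ₁ τ h z := by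
  induction n using Int.induction_on with
  | zero => simp
  | succ n ih =>
      have : z + ((n : ℤ) + 1 : ℤ) = (z + (n : ℤ)) + 1 := by push_cast; ring
      rw [this, phi_add_one, ih]
  | pred n ih =>
      have h1 := phi_add_one τ h (z + (-(n : ℤ) - 1 : ℤ))
      have h2 : z + ((-(n : ℤ) - 1 : ℤ) : ℂ) + 1 = z + ((-(n : ℤ) : ℤ) : ℂ) := by
        push_cast; ring
      rw [h2, ih] at h1
      exact h1.symm

lemma alpha_int (N l m : ℕ) (hN : 0 < N) (i : ℕ) :
    (alphaMap N l m i : ℤ) = ((i : ℤ) + m - l - 1) % N + 1 := by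
  unfold alphaMap
  have := Int.emod_nonneg ((i : ℤ) + m - l - 1) (by exact_mod_cast hN.ne' : (N : ℤ) ≠ 0)
  push_cast [Int.toNat_of_nonneg this]
  ring

lemma alpha_mem (N l m : ℕ) (hN : 0 < N) (i : ℕ) (hi : i ∈ Finset.Icc 1 N) :
    alphaMap N l m i ∈ Finset.Icc 1 N := by
  have h1 := Int.emod_nonneg ((i : ℤ) + m - l - 1) (by exact_mod_cast hN.ne' : (N : ℤ) ≠ 0)
  have h2 := Int.emod_lt_of_pos ((i : ℤ) + m - l - 1) (by exact_mod_cast hN : (0:ℤ) < N)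
  have h3 := alpha_int N l m hN i
  simp only [Finset.mem_Icc] at *
  omega

lemma alpha_injOn (N l m : ℕ) (hN : 0 < N) :
    Set.InjOn (alphaMap N l m) (Finset.Icc 1 N) := by
  intro i hi j hj hij
  simp only [Finset.coe_Icc, Set.mem_Icc] at hi hj
  have hi' := alpha_int N l m hN i
  have hj' := alpha_int N l m hN j
  have h : ((i : ℤ) + m - l - 1) % N = ((j : ℤ) + m - l - 1) % N := by
    have : (alphaMap N l m i : ℤ) = alphaMap N l m j := by exact_mod_cast hij
    omega
  have hd : (N : ℤ) ∣ ((i : ℤ) + m - l - 1) - ((j : ℤ) + m - l - 1) :=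
    Int.ModEq.dvd (Int.ModEq.symm h)
  obtain ⟨t, ht⟩ := hd
  have ht' : (i : ℤ) - j = N * t := by linarith
  have hb : -(N:ℤ) < (i:ℤ) - j ∧ (i:ℤ) - j < N := by
    constructor <;> [nlinarith [hi.1, hj.2]; nlinarith [hi.2, hj.1]]
  have htz : t = 0 := by
    rcases lt_trichotomy t 0 with h0 | h0 | h0
    · nlinarith [hb.1]
    · exact h0
    · nlinarith [hb.2]
  have : (i : ℤ) = j := by rw [htz, mul_zero] at ht'; linarith
  exact_mod_cast this

lemma alpha_l (N l m : ℕ) (hN : 0 < N) (hm1 : 1 ≤ m) (hmN : m ≤ N) :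
    alphaMap N l m l = m := by
  have h3 := alpha_int N l m hN l
  have : ((l : ℤ) + m - l - 1) % N = (m : ℤ) - 1 := by
    rw [show (l : ℤ) + m - l - 1 = (m : ℤ) - 1 by ring]
    exact Int.emod_eq_of_lt (by omega) (by omega)
  omega

/-- Translation invariance of the doubled products (the core of the Lemma in
Section 5 of the paper). -/
theorem doubled_product_translation (τ : ℂ) (hτ : 0 < τ.im) (hbar : ℂ)
    (N : ℕ) (hN : 0 < N) (k l m : ℕ)
    (hl : l ∈ Finset.Icc 1 N) (hm : m ∈ Finset.Icc 1 N)
    (I : Finset ℕ) (hI : I ⊆ Finset.Icc 1 N) (hIcard : I.card = k) (hlI : l ∈ I) :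
    (I.image (alphaMap N l m)).card = k ∧ m ∈ I.image (alphaMap N l m) ∧
    (∏ i ∈ I, ∏ j ∈ Finset.Icc 1 N \ I,
        φ₁ τ hbar ((j : ℂ) / N - (i : ℂ) / N) * φ₁ τ hbar ((i : ℂ) / N - (j : ℂ) / N))
    = ∏ i ∈ I.image (alphaMap N l m), ∏ j ∈ Finset.Icc 1 N \ I.image (alphaMap N l m),
        φ₁ τ hbar ((j : ℂ) / N - (i : ℂ) / N) * φ₁ τ hbar ((i : ℂ) / N - (j : ℂ) / N) := by
  set α := alphaMap N l m with hα
  have hinj := alpha_injOn N l m hN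
  have hinjI : ∀ x ∈ I, ∀ y ∈ I, α x = α y → x = y := fun x hx y hy hxy =>
    hinj (Finset.mem_coe.mpr (hI hx)) (Finset.mem_coe.mpr (hI hy)) hxy
  have hinjD : ∀ x ∈ Finset.Icc 1 N \ I, ∀ y ∈ Finset.Icc 1 N \ I, α x = α y → x = y :=
    fun x hx y hy hxy =>
      hinj (Finset.mem_coe.mpr (Finset.mem_sdiff.mp hx).1)
        (Finset.mem_coe.mpr (Finset.mem_sdiff.mp hy).1) hxy
  simp only [Finset.mem_Icc] at hm
  refine ⟨by rw [Finset.card_image_of_injOn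
      (hinj.mono (by exact_mod_cast hI))]; exact hIcard,
    Finset.mem_image.mpr ⟨l, hlI, alpha_l N l m hN hm.1 hm.2⟩, ?_⟩
  -- image of the whole interval
  have himgS : (Finset.Icc 1 N).image α = Finset.Icc 1 N := by
    apply Finset.eq_of_subset_of_card_le
    · intro x hx
      obtain ⟨y, hy, rfl⟩ := Finset.mem_image.mp hx
      exact alpha_mem N l m hN y hy
    · rw [Finset.card_image_of_injOn hinj]
  have hsdiff : Finset.Icc 1 N \ I.image α = (Finset.Icc 1 N \ I).image α := by
    ext j
    constructor
    · intro hj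
      obtain ⟨hjS, hjn⟩ := Finset.mem_sdiff.mp hj
      obtain ⟨j', hj'S, rfl⟩ := Finset.mem_image.mp (himgS ▸ hjS)
      exact Finset.mem_image.mpr ⟨j', Finset.mem_sdiff.mpr ⟨hj'S,
        fun hj'I => hjn (Finset.mem_image.mpr ⟨j', hj'I, rfl⟩)⟩, rfl⟩
    · intro hj
      obtain ⟨j', hj', rfl⟩ := Finset.mem_image.mp hj
      obtain ⟨hj'S, hj'I⟩ := Finset.mem_sdiff.mp hj'
      refine Finset.mem_sdiff.mpr ⟨alpha_mem N l m hN j' hj'S, fun hc => ?_⟩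
      obtain ⟨i, hiI, hie⟩ := Finset.mem_image.mp hc
      exact hj'I (hinj (Finset.mem_coe.mpr (hI hiI)) (Finset.mem_coe.mpr hj'S) hie ▸ hiI)
  -- key pointwise factor equality
  have key : ∀ i ∈ Finset.Icc 1 N, ∀ j ∈ Finset.Icc 1 N,
      φ₁ τ hbar ((α j : ℂ) / N - (α i : ℂ) / N) * φ₁ τ hbar ((α i : ℂ) / N - (α j : ℂ) / N)
      = φ₁ τ hbar ((j : ℂ) / N - (i : ℂ) / N) * φ₁ τ hbar ((i : ℂ) / N - (j : ℂ) / N) := by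
    intro i _ j _
    have hNne : (N : ℂ) ≠ 0 := by exact_mod_cast hN.ne'
    set t : ℤ := ((i : ℤ) + m - l - 1) / N - ((j : ℤ) + m - l - 1) / N with htdef
    have hint : (α j : ℤ) - (α i : ℤ) = ((j : ℤ) - i) + N * t := by
      rw [hα, alpha_int N l m hN, alpha_int N l m hN, Int.emod_def, Int.emod_def, htdef]
      ring
    have h2 : ((α j : ℂ)) - (α i : ℂ) = ((j : ℂ) - i) + N * t := by exact_mod_cast hint
    have hC : (α j : ℂ) / N - (α i : ℂ) / N = ((j : ℂ) / N - (i : ℂ) / N) + (t : ℤ) := by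
      rw [← sub_div, h2, add_div, ← sub_div, mul_div_cancel_left₀ _ hNne]
    have hC2 : (α i : ℂ) / N - (α j : ℂ) / N
        = ((i : ℂ) / N - (j : ℂ) / N) + ((-t : ℤ) : ℂ) := by
      push_cast
      push_cast at hC
      linear_combination -hC
    rw [hC, hC2, phi_add_int, phi_add_int]
  calc (∏ i ∈ I, ∏ j ∈ Finset.Icc 1 N \ I,
        φ₁ τ hbar ((j : ℂ) / N - (i : ℂ) / N) * φ₁ τ hbar ((i : ℂ) / N - (j : ℂ) / N))
      = ∏ i ∈ I, ∏ j ∈ Finset.Icc 1 N \ I,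
        φ₁ τ hbar ((α j : ℂ) / N - (α i : ℂ) / N)
          * φ₁ τ hbar ((α i : ℂ) / N - (α j : ℂ) / N) := by
        refine Finset.prod_congr rfl fun i hi => Finset.prod_congr rfl fun j hj => ?_
        exact (key i (hI hi) j (Finset.mem_sdiff.mp hj).1).symm
    _ = ∏ i ∈ I, ∏ j ∈ (Finset.Icc 1 N \ I).image α,
        φ₁ τ hbar ((j : ℂ) / N - (α i : ℂ) / N)
          * φ₁ τ hbar ((α i : ℂ) / N - (j : ℂ) / N) := by
        refine Finset.prod_congr rfl fun i hi => ?_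
        rw [Finset.prod_image hinjD]
    _ = ∏ i ∈ I.image α, ∏ j ∈ Finset.Icc 1 N \ I.image α,
        φ₁ τ hbar ((j : ℂ) / N - (i : ℂ) / N) * φ₁ τ hbar ((i : ℂ) / N - (j : ℂ) / N) := by
        rw [Finset.prod_image hinjI, hsdiff]
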